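/- Let k ∈ ℝ, ε ∈ (0, 10⁻³·min{2, 1+|k|}], and r0 > 0 with r0 ≤ 10⁻³ and |k|·r0 ≤ 10⁻³. Let r1 ∈ (0, r0] satisfy: (a) (1/2)·r ≤ sn_{k'}(r) ≤ 2r for all k' ∈ [k−1, k+1] and all r ∈ (0, r1]; (b) 0 ≤ (k−ε)r² + 2/log(1/r) + 1/(log(1/r))² ≤ 1 and 0 ≤ (k−ε)r² + 1/log(1/r) ≤ 1 for all r ∈ (0, r1]. Set r4 = ε·r1², w4 = log(1/r4), and α = √(1 − ε·sn_k(r1)²). Then there exist real numbers c1 and r3 with (1/32)·w4·ε·r1² ≤ c1 ≤ √(8r4)·w4 and 0 < r3 ≤ 4ε·r1², satisfying the matching system α·sn_{k−ε}(r3) = r4·(1 − c1/w4) and α·cn_{k−ε}(r3) = 1 − c1/w4 − c1/w4². -/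

import Mathlib

/-- `sn k` is the generalized sine function: solution of `sn'' + k·sn = 0`
with `sn(0)=0`, `sn'(0)=1`. -/
noncomputable def sn (k r : ℝ) : ℝ :=
  if 0 < k then Real.sin (Real.sqrt k * r) / Real.sqrt k
  else if k = 0 then r
  else Real.sinh (Real.sqrt (-k) * r) / Real.sqrt (-k)

/-- `cn k = (sn k)'`. -/
noncomputable def cn (k r : ℝ) : ℝ := deriv (sn k) r

lemma sn_apply_pos {k : ℝ} (h : 0 < k) :
    sn k = fun r => Real.sin (Real.sqrt k * r) / Real.sqrt k := by
  funext r; simp [sn, h]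

lemma sn_apply_zero : sn 0 = fun r : ℝ => r := by
  funext r; simp [sn]

lemma sn_apply_neg {k : ℝ} (h : k < 0) :
    sn k = fun r => Real.sinh (Real.sqrt (-k) * r) / Real.sqrt (-k) := by
  funext r; simp [sn, not_lt.mpr h.le, h.ne]

lemma cn_of_pos {k : ℝ} (h : 0 < k) (r : ℝ) :
    cn k r = Real.cos (Real.sqrt k * r) := by
  have hk0 : (0:ℝ) < Real.sqrt k := Real.sqrt_pos.mpr h
  have h1 : HasDerivAt (fun r : ℝ => Real.sin (Real.sqrt k * r))
      (Real.cos (Real.sqrt k * r) * Real.sqrt k) r := by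
    simpa [Function.comp_def, mul_comm] using (Real.hasDerivAt_sin (Real.sqrt k * r)).comp r
      ((hasDerivAt_id r).const_mul (Real.sqrt k))
  have h2 := (h1.div_const (Real.sqrt k)).deriv
  rw [cn, sn_apply_pos h, h2]
  field_simp

lemma cn_of_zero (r : ℝ) : cn 0 r = 1 := by
  rw [cn, sn_apply_zero]
  simp

lemma cn_of_neg {k : ℝ} (h : k < 0) (r : ℝ) :
    cn k r = Real.cosh (Real.sqrt (-k) * r) := by
  have hk0 : (0:ℝ) < Real.sqrt (-k) := Real.sqrt_pos.mpr (by linarith)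
  have h1 : HasDerivAt (fun r : ℝ => Real.sinh (Real.sqrt (-k) * r))
      (Real.cosh (Real.sqrt (-k) * r) * Real.sqrt (-k)) r := by
    simpa [Function.comp_def, mul_comm] using (Real.hasDerivAt_sinh (Real.sqrt (-k) * r)).comp r
      ((hasDerivAt_id r).const_mul (Real.sqrt (-k)))
  have h2 := (h1.div_const (Real.sqrt (-k))).deriv
  rw [cn, sn_apply_neg h, h2]
  field_simp

lemma sn_cn_identity (k r : ℝ) : k * sn k r ^ 2 + cn k r ^ 2 = 1 := by
  rcases lt_trichotomy k 0 with h | h | h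
  · rw [sn_apply_neg h, cn_of_neg h]
    have hk : Real.sqrt (-k) ^ 2 = -k := Real.sq_sqrt (by linarith)
    have hk0 : Real.sqrt (-k) ≠ 0 := (Real.sqrt_pos.mpr (by linarith)).ne'
    have hid := Real.cosh_sq_sub_sinh_sq (Real.sqrt (-k) * r)
    have : k * (Real.sinh (Real.sqrt (-k) * r) / Real.sqrt (-k)) ^ 2
        = - Real.sinh (Real.sqrt (-k) * r) ^ 2 := by
      rw [div_pow, hk]
      field_simp [h.ne]
    rw [this]; linarith
  · subst h; rw [sn_apply_zero, cn_of_zero]; ring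
  · rw [sn_apply_pos h, cn_of_pos h]
    have hk : Real.sqrt k ^ 2 = k := Real.sq_sqrt h.le
    have hk0 : Real.sqrt k ≠ 0 := (Real.sqrt_pos.mpr h).ne'
    have hid := Real.sin_sq_add_cos_sq (Real.sqrt k * r)
    have : k * (Real.sin (Real.sqrt k * r) / Real.sqrt k) ^ 2
        = Real.sin (Real.sqrt k * r) ^ 2 := by
      rw [div_pow, hk]
      field_simp
    rw [this]; linarith

lemma continuous_sn (k : ℝ) : Continuous (sn k) := by
  rcases lt_trichotomy k 0 with h | h | h
  · rw [sn_apply_neg h]; fun_prop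
  · subst h; rw [sn_apply_zero]; fun_prop
  · rw [sn_apply_pos h]; fun_prop

lemma sn_zero (k : ℝ) : sn k 0 = 0 := by
  rcases lt_trichotomy k 0 with h | h | h
  · rw [sn_apply_neg h]; simp
  · subst h; rw [sn_apply_zero]
  · rw [sn_apply_pos h]; simp

lemma cn_pos {k r : ℝ} (hr : 0 ≤ r) (h : k * r ^ 2 < 2) : 0 < cn k r := by
  rcases lt_trichotomy k 0 with hk | hk | hk
  · rw [cn_of_neg hk]; exact Real.cosh_pos _
  · subst hk; rw [cn_of_zero]; norm_num
  · rw [cn_of_pos hk]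
    apply Real.cos_pos_of_mem_Ioo
    have hx0 : 0 ≤ Real.sqrt k * r := mul_nonneg (Real.sqrt_nonneg k) hr
    constructor
    · have := Real.pi_pos; linarith
    · have hsq : (Real.sqrt k * r) ^ 2 = k * r ^ 2 := by
        rw [mul_pow, Real.sq_sqrt hk.le]
      have hpi : 3 < Real.pi := Real.pi_gt_three
      nlinarith [hx0, hsq, hpi]


lemma aux_lo (K R v E : ℝ) (hR0 : 0 < R) (hR1 : R ≤ 1)
    (hKR : -(1/8) ≤ K * R) (hv0 : 0 ≤ v) (hv : v ≤ R/32)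
    (hE : R/4 ≤ 1 - E) :
    E ≤ K * (R * (1 - R/32)) ^ 2 + (1 - R/32 - v) ^ 2 := by
  have h1 : (1 - R/32 - v) ^ 2 ≥ 1 - R/16 - 2*v := by
    nlinarith [sq_nonneg (R/32 + v)]
  have h2 : K * (R * (1 - R/32)) ^ 2 ≥ -(R/8) := by
    have e : K * (R * (1 - R/32)) ^ 2 = (K * R) * (R * (1 - R/32) ^ 2) := by ring
    rw [e]
    have h3 : 0 ≤ R * (1 - R/32) ^ 2 := by positivity
    have h4 : R * (1 - R/32) ^ 2 ≤ R := by nlinarith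
    nlinarith [mul_nonneg (by linarith : (0:ℝ) ≤ K * R + 1/8) h3]
  linarith

lemma aux_hi (K R v q E : ℝ) (hR0 : 0 < R) (hKR : K * R ≤ 1/8)
    (hq8 : 8*R ≤ q) (hq1 : q ≤ 1/10) (hv0 : 0 ≤ v) (hv : v ≤ q)
    (hE : 1 - E ≤ 4*R) :
    K * (R * (1 - q)) ^ 2 + (1 - q - v) ^ 2 ≤ E := by
  have hq0 : 0 < q := lt_of_lt_of_le (by linarith) hq8
  have h1 : (1 - q - v) ^ 2 ≤ 1 - q - v := by
    nlinarith [mul_nonneg (by linarith : (0:ℝ) ≤ q + v)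
      (by linarith : (0:ℝ) ≤ 1 - q - v)]
  have h2 : K * (R * (1 - q)) ^ 2 ≤ R/8 := by
    have e : K * (R * (1 - q)) ^ 2 = (K * R) * (R * (1 - q) ^ 2) := by ring
    rw [e]
    have h3 : 0 ≤ R * (1 - q) ^ 2 := by positivity
    have h4 : R * (1 - q) ^ 2 ≤ R := by
      nlinarith [mul_nonneg hR0.le (mul_nonneg hq0.le (by linarith : (0:ℝ) ≤ 2 - q))]
    nlinarith [mul_nonneg (by linarith : (0:ℝ) ≤ 1/8 - K * R) h3]
  linarith

lemma aux_div (c w : ℝ) (hc : 0 ≤ c) (hw : 1 ≤ w) : c / w ^ 2 ≤ c / w := by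
  have hw0 : (0:ℝ) < w := by linarith
  rw [div_le_div_iff₀ (by positivity) hw0]
  nlinarith [mul_nonneg hc (mul_nonneg hw0.le (by linarith : (0:ℝ) ≤ w - 1))]


set_option maxHeartbeats 8000000 in
/-- existence of the parameters `c1, r3` solving the C¹ matching
system between the constant-curvature conical piece and the core drawstring
piece, with the stated quantitative bounds. -/
theorem stmt_1 (k ε r0 r1 : ℝ)
    (hε0 : 0 < ε) (hε1 : ε ≤ (1 / 1000) * min 2 (1 + |k|))
    (hr00 : 0 < r0) (hr01 : r0 ≤ 1 / 1000) (hkr0 : |k| * r0 ≤ 1 / 1000)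
    (hr10 : 0 < r1) (hr11 : r1 ≤ r0)
    (ha : ∀ k' ∈ Set.Icc (k - 1) (k + 1), ∀ r ∈ Set.Ioc (0 : ℝ) r1,
      (1 / 2) * r ≤ sn k' r ∧ sn k' r ≤ 2 * r)
    (hb : ∀ r ∈ Set.Ioc (0 : ℝ) r1,
      (0 ≤ (k - ε) * r ^ 2 + 2 / Real.log (1 / r) + 1 / (Real.log (1 / r)) ^ 2 ∧
        (k - ε) * r ^ 2 + 2 / Real.log (1 / r) + 1 / (Real.log (1 / r)) ^ 2 ≤ 1) ∧
      (0 ≤ (k - ε) * r ^ 2 + 1 / Real.log (1 / r) ∧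
        (k - ε) * r ^ 2 + 1 / Real.log (1 / r) ≤ 1)) :
    ∃ c1 r3 : ℝ,
      (1 / 32) * Real.log (1 / (ε * r1 ^ 2)) * ε * r1 ^ 2 ≤ c1 ∧
      c1 ≤ Real.sqrt (8 * (ε * r1 ^ 2)) * Real.log (1 / (ε * r1 ^ 2)) ∧
      0 < r3 ∧ r3 ≤ 4 * ε * r1 ^ 2 ∧
      Real.sqrt (1 - ε * (sn k r1) ^ 2) * sn (k - ε) r3
        = (ε * r1 ^ 2) * (1 - c1 / Real.log (1 / (ε * r1 ^ 2))) ∧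
      Real.sqrt (1 - ε * (sn k r1) ^ 2) * cn (k - ε) r3
        = 1 - c1 / Real.log (1 / (ε * r1 ^ 2))
            - c1 / (Real.log (1 / (ε * r1 ^ 2))) ^ 2 := by
  -- basic numeric facts
  clear hb
  have hε500 : ε ≤ 1 / 500 := by
    have h2 : min 2 (1 + |k|) ≤ 2 := min_le_left _ _
    nlinarith
  have hr1 : r1 ≤ 1 / 1000 := le_trans hr11 hr01
  have hkr1 : |k| * r1 ≤ 1 / 1000 := by
    calc |k| * r1 ≤ |k| * r0 := mul_le_mul_of_nonneg_left hr11 (abs_nonneg k)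
      _ ≤ 1 / 1000 := hkr0
  set r4 : ℝ := ε * r1 ^ 2 with hr4def
  have hr4pos : 0 < r4 := by positivity
  clear_value r4
  have hr4small : r4 ≤ 1 / 100000000 := by
    rw [hr4def]; nlinarith
  have hkabs : |k - ε| ≤ |k| + ε := by
    have := abs_add_le k (-ε)
    simpa [abs_of_pos hε0, ← sub_eq_add_neg] using this
  have hk4 : |k| * r4 ≤ ε * r1 / 1000 := by
    have he : |k| * r4 = (|k| * r1) * (ε * r1) := by rw [hr4def]; ring
    rw [he]
    have hεr1 : 0 ≤ ε * r1 := by positivity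
    nlinarith
  have hK : |k - ε| * r4 ≤ 1 / 8 := by
    have h1 : |k - ε| * r4 ≤ (|k| + ε) * r4 :=
      mul_le_mul_of_nonneg_right hkabs hr4pos.le
    have h2 : ε * r4 ≤ (1/500) * (1/100000000) := by nlinarith
    nlinarith
  -- bounds on s = sn k r1
  obtain ⟨hs1, hs2⟩ := ha k ⟨by linarith, by linarith⟩ r1 ⟨hr10, le_refl r1⟩
  set s := sn k r1 with hsdef
  clear_value s
  have hspos : 0 < s := by linarith
  have hsq_hi : s ^ 2 ≤ 4 * r1 ^ 2 := by nlinarith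
  have hsq_lo : r1 ^ 2 / 4 ≤ s ^ 2 := by nlinarith
  have hεs_hi : ε * s ^ 2 ≤ 4 * r4 := by
    rw [hr4def]; nlinarith [mul_nonneg hε0.le (sub_nonneg.mpr hsq_hi)]
  have hεs_lo : r4 / 4 ≤ ε * s ^ 2 := by
    rw [hr4def]; nlinarith [mul_nonneg hε0.le (sub_nonneg.mpr hsq_lo)]
  set A := 1 - ε * s ^ 2 with hAdef
  clear_value A
  have hA34 : 3 / 4 ≤ A := by rw [hAdef]; linarith
  have hA1 : A ≤ 1 := by
    rw [hAdef]; nlinarith [mul_nonneg hε0.le (sq_nonneg s)]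
  have hApos : 0 < A := by linarith
  set α := Real.sqrt A with hαdef
  have hα2 : α ^ 2 = A := Real.sq_sqrt hApos.le
  have hαpos : 0 < α := Real.sqrt_pos.mpr hApos
  clear_value α
  have hαhalf : 1 / 2 ≤ α := by nlinarith [hα2, hA34, hαpos.le]
  -- w = log(1/r4)
  set w := Real.log (1 / r4) with hwdef
  have hw1 : 1 ≤ w := by
    rw [hwdef]
    have hexp : Real.exp 1 ≤ 1 / r4 := by
      have h9 := Real.exp_one_lt_d9
      have h4 : (100000000 : ℝ) ≤ 1 / r4 := by
        rw [le_div_iff₀ hr4pos]; nlinarith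
      linarith
    calc (1:ℝ) = Real.log (Real.exp 1) := (Real.log_exp 1).symm
      _ ≤ Real.log (1 / r4) := Real.log_le_log (Real.exp_pos 1) hexp
  clear_value w
  have hwpos : 0 < w := lt_of_lt_of_le one_pos hw1
  -- q = sqrt(8 r4)
  set q := Real.sqrt (8 * r4) with hqdef
  have hq2 : q ^ 2 = 8 * r4 := Real.sq_sqrt (by positivity)
  have hqpos : 0 < q := Real.sqrt_pos.mpr (by positivity)
  clear_value q
  have hq10 : q ≤ 1 / 10 := by nlinarith [hqpos.le]
  have hq8 : 8 * r4 ≤ q := by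
    nlinarith [mul_nonneg hqpos.le (by linarith : (0:ℝ) ≤ 1 - q)]
  -- the matching function G
  set G : ℝ → ℝ := fun c =>
    (k - ε) * (r4 * (1 - c / w)) ^ 2 + (1 - c / w - c / w ^ 2) ^ 2 with hGdef
  have hGcont : Continuous G := by
    rw [hGdef]; fun_prop
  clear_value G
  have hclo_le : w * r4 / 32 ≤ q * w := by nlinarith
  -- G at the left endpoint
  have hKlo : -(1/8) ≤ (k - ε) * r4 := by
    have h0 : 0 ≤ (k - ε + |k - ε|) * r4 :=
      mul_nonneg (by linarith [neg_abs_le (k - ε)]) hr4pos.le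
    nlinarith
  have hKhi : (k - ε) * r4 ≤ 1/8 := by
    have h0 : 0 ≤ (|k - ε| - (k - ε)) * r4 :=
      mul_nonneg (by linarith [le_abs_self (k - ε)]) hr4pos.le
    nlinarith
  have hGlo : A ≤ G (w * r4 / 32) := by
    rw [hGdef]
    simp only
    have hu : w * r4 / 32 / w = r4 / 32 := by field_simp
    rw [hu]
    have hv0 : 0 ≤ w * r4 / 32 / w ^ 2 := by positivity
    have hv : w * r4 / 32 / w ^ 2 ≤ r4 / 32 := by
      have := aux_div (w * r4 / 32) w (by positivity) hw1
      rw [hu] at this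
      linarith
    exact aux_lo (k - ε) r4 _ A hr4pos (by linarith) hKlo hv0 hv
      (by rw [hAdef]; linarith)
  -- G at the right endpoint
  have hGhi : G (q * w) ≤ A := by
    rw [hGdef]
    simp only
    have hu : q * w / w = q := by field_simp
    rw [hu]
    have hv0 : 0 ≤ q * w / w ^ 2 := by positivity
    have hv : q * w / w ^ 2 ≤ q := by
      have := aux_div (q * w) w (by positivity) hw1
      rw [hu] at this
      linarith
    exact aux_hi (k - ε) r4 _ q A hr4pos hKhi hq8 hq10 hv0 hv
      (by rw [hAdef]; linarith)
  -- IVT for c1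
  obtain ⟨c1, hc1mem, hc1eq⟩ :=
    intermediate_value_Icc' hclo_le hGcont.continuousOn ⟨hGhi, hGlo⟩
  obtain ⟨hc1lo, hc1hi⟩ := hc1mem
  have hc1pos : 0 < c1 := lt_of_lt_of_le (by positivity) hc1lo
  have hc1w_lo : r4 / 32 ≤ c1 / w := by
    rw [le_div_iff₀ hwpos]; linarith
  have hc1w_hi : c1 / w ≤ q := by
    rw [div_le_iff₀ hwpos]; linarith
  have hc1w2_0 : 0 ≤ c1 / w ^ 2 := by positivity
  have hc1w2 : c1 / w ^ 2 ≤ c1 / w := aux_div c1 w hc1pos.le hw1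
  set X := r4 * (1 - c1 / w) with hXdef
  set Y := 1 - c1 / w - c1 / w ^ 2 with hYdef
  clear_value X Y
  have hXY : (k - ε) * X ^ 2 + Y ^ 2 = A := by
    rw [hGdef] at hc1eq
    simp only at hc1eq
    rw [hXdef, hYdef]
    exact hc1eq
  have hYlo : 4 / 5 ≤ Y := by rw [hYdef]; linarith
  have hX0 : 0 < X := by
    rw [hXdef]
    exact mul_pos hr4pos (by linarith)
  have hXr4 : X ≤ r4 := by
    rw [hXdef]
    exact mul_le_of_le_one_right hr4pos.le (by linarith)
  -- IVT for r3
  have hRr1 : 4 * r4 ≤ r1 := by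
    rw [hr4def]
    have h := mul_le_mul hε500 hr1 hr10.le (by norm_num)
    have h2 : 0 ≤ (1/500 * (1/1000) - ε * r1) * r1 :=
      mul_nonneg (by linarith) hr10.le
    have h3 : (1/500 * (1/1000) - ε * r1) * r1 = r1/500000 - ε * r1 ^ 2 := by ring
    rw [h3] at h2
    linarith
  obtain ⟨hsnR1, hsnR2⟩ := ha (k - ε) ⟨by linarith, by linarith⟩ (4 * r4)
    ⟨by positivity, hRr1⟩
  have hXα : X / α ≤ sn (k - ε) (4 * r4) := by
    have h1 : X / α ≤ 2 * r4 := by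
      rw [div_le_iff₀ hαpos]
      have h2 : 0 ≤ r4 * (α - 1/2) := mul_nonneg hr4pos.le (by linarith)
      have h3 : r4 * (α - 1/2) = r4 * α - r4/2 := by ring
      rw [h3] at h2
      have h4 : 2 * r4 * α = 2 * (r4 * α) := by ring
      rw [h4]
      linarith
    linarith
  have hXα0 : 0 < X / α := by positivity
  have hIVT := intermediate_value_Icc (by positivity : (0:ℝ) ≤ 4 * r4)
    (continuous_sn (k - ε)).continuousOn
  rw [sn_zero] at hIVT
  obtain ⟨r3, hr3mem, hr3eq⟩ := hIVT ⟨hXα0.le, hXα⟩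
  have hr3pos : 0 < r3 := by
    rcases hr3mem.1.lt_or_eq with h | h
    · exact h
    · exfalso
      rw [← h, sn_zero] at hr3eq
      exact absurd hr3eq.symm (ne_of_gt hXα0)
  -- cn at r3
  have hr3sq : r3 ^ 2 ≤ 16 * r4 ^ 2 := by
    have h0 : 0 ≤ (4*r4 - r3) * (4*r4 + r3) :=
      mul_nonneg (by linarith [hr3mem.2]) (by linarith [hr3mem.1, hr4pos.le])
    have h1 : (4*r4 - r3) * (4*r4 + r3) = 16 * r4 ^ 2 - r3 ^ 2 := by ring
    rw [h1] at h0
    linarith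
  have hcnpos : 0 < cn (k - ε) r3 := by
    apply cn_pos hr3mem.1
    have h4 : (k - ε) * r3 ^ 2 ≤ |k - ε| * (16 * r4 ^ 2) := by
      calc (k - ε) * r3 ^ 2 ≤ |k - ε| * r3 ^ 2 :=
            mul_le_mul_of_nonneg_right (le_abs_self _) (sq_nonneg r3)
        _ ≤ |k - ε| * (16 * r4 ^ 2) :=
            mul_le_mul_of_nonneg_left hr3sq (abs_nonneg _)
    have h5 : |k - ε| * (16 * r4 ^ 2) ≤ 2 * r4 := by
      have h0 : 0 ≤ (1/8 - |k - ε| * r4) * (16 * r4) :=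
        mul_nonneg (by linarith) (by linarith)
      have h1 : (1/8 - |k - ε| * r4) * (16 * r4)
          = 2 * r4 - 16 * (|k - ε| * r4 ^ 2) := by ring
      rw [h1] at h0
      have h2 : |k - ε| * (16 * r4 ^ 2) = 16 * (|k - ε| * r4 ^ 2) := by ring
      linarith [h2]
    linarith
  have hid := sn_cn_identity (k - ε) r3
  rw [hr3eq] at hid
  have hid2 : (k - ε) * X ^ 2 + (cn (k - ε) r3) ^ 2 * α ^ 2 = α ^ 2 := by
    field_simp [hαpos.ne'] at hid
    linear_combination hid
  have key : (α * cn (k - ε) r3 - Y) * (α * cn (k - ε) r3 + Y) = 0 := by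
    linear_combination hid2 - hXY + hα2
  have hcnval : α * cn (k - ε) r3 = Y := by
    rcases mul_eq_zero.mp key with h | h
    · linarith
    · exfalso
      have := mul_pos hαpos hcnpos
      linarith
  -- conclusion
  refine ⟨c1, r3, ?_, ?_, hr3pos, ?_, ?_, ?_⟩
  · calc (1/32) * w * ε * r1 ^ 2 = w * r4 / 32 := by rw [hr4def]; ring
      _ ≤ c1 := hc1lo
  · exact hc1hi
  · rw [hr4def] at hr3mem
    linarith [hr3mem.2]
  · rw [hr3eq, hXdef]
    field_simp
  · rw [hcnval, hYdef]
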